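/- The Riemannian metric ds² = (2/(b² sin²(2u)))(du² + dv²) on M = (0, π/2) × R has constant Gaussian curvature −2b², and (M, ds²) is a complete Riemannian manifold. -/

import Mathlib

open Real MeasureTheory Set intervalIntegral


-- two-sided FTC bound
lemma abs_sub_le_int (t : ℝ) (ht : 0 ≤ t) (g g' φ : ℝ → ℝ)
    (hcont : ContinuousOn g (Icc 0 t))
    (hderiv : ∀ x ∈ Ioo 0 t, HasDerivWithinAt g (g' x) (Ioi x) x)
    (hφint : IntegrableOn φ (Icc 0 t))
    (hbound : ∀ x ∈ Ioo 0 t, |g' x| ≤ φ x) :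
    |g t - g 0| ≤ ∫ x in (0:ℝ)..t, φ x := by
  have h1 := sub_le_integral_of_hasDeriv_right_of_le ht hcont hderiv hφint
    (fun x hx => (le_abs_self _).trans (hbound x hx))
  have h2 := sub_le_integral_of_hasDeriv_right_of_le ht hcont.neg
    (fun x hx => (hderiv x hx).neg) hφint
    (fun x hx => (neg_le_abs _).trans (hbound x hx))
  simp only [Pi.neg_apply] at h2
  rw [abs_sub_le_iff]
  constructor <;> linarith

-- derivative of the "primitive" Φ
lemma hasDerivAt_Phi (b : ℝ) (hb : 0 < b) {x : ℝ} (hx : x ∈ Ioo (0:ℝ) (π/2)) :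
    HasDerivAt (fun y => (Real.sqrt 2 / (2 * b)) * Real.log (Real.tan y))
      (Real.sqrt 2 / (b * Real.sin (2 * x))) x := by
  have hcos : 0 < Real.cos x := Real.cos_pos_of_mem_Ioo ⟨by linarith [hx.1, Real.pi_pos], hx.2⟩
  have hsin : 0 < Real.sin x := Real.sin_pos_of_pos_of_lt_pi hx.1 (by linarith [hx.2, Real.pi_pos])
  have htan : 0 < Real.tan x := Real.tan_pos_of_pos_of_lt_pi_div_two hx.1 hx.2
  have h1 : HasDerivAt Real.tan (1 / Real.cos x ^ 2) x := Real.hasDerivAt_tan hcos.ne'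
  have h2 := ((Real.hasDerivAt_log htan.ne').comp x h1).const_mul (Real.sqrt 2 / (2 * b))
  refine h2.congr_deriv ?_
  rw [Real.sin_two_mul, Real.tan_eq_sin_div_cos]
  field_simp

/- STATEMENT 15 -/
theorem stmt_15 (b : ℝ) (hb : 0 < b) :
    -- constant Gaussian curvature −2b²
    (∀ u ∈ Set.Ioo (0 : ℝ) (Real.pi / 2),
      -(1 / (Real.sqrt 2 / (b * Real.sin (2 * u))) ^ 2) *
        deriv (deriv (fun w => Real.log (Real.sqrt 2 / (b * Real.sin (2 * w))))) u
      = -(2 * b ^ 2)) ∧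
    -- completeness: divergent curves have infinite length
    (∀ γ : ℝ → ℝ × ℝ, ContDiffOn ℝ 1 γ (Set.Ico (0 : ℝ) 1) →
      (∀ t ∈ Set.Ico (0 : ℝ) 1, (γ t).1 ∈ Set.Ioo (0 : ℝ) (Real.pi / 2)) →
      (∀ K : Set (ℝ × ℝ), K ⊆ (Set.Ioo (0 : ℝ) (Real.pi / 2)) ×ˢ (Set.univ : Set ℝ) →
        IsCompact K → ∀ᶠ t in nhdsWithin 1 (Set.Iio (1 : ℝ)), γ t ∉ K) →
      ¬ IntervalIntegrable
          (fun t => (Real.sqrt 2 / (b * Real.sin (2 * (γ t).1))) * ‖deriv γ t‖)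
          MeasureTheory.volume 0 1) := by
  constructor
  ·   intro u hu
      obtain ⟨hu0, hu2⟩ := hu
      have hS : IsOpen {w : ℝ | Real.sin (2 * w) ≠ 0} :=
        isOpen_ne.preimage (by fun_prop)
      have hsinu : 0 < Real.sin (2 * u) :=
        Real.sin_pos_of_pos_of_lt_pi (by linarith) (by linarith)
      have hmem : {w : ℝ | Real.sin (2 * w) ≠ 0} ∈ nhds u :=
        hS.mem_nhds hsinu.ne'
      -- step 1 : f =ᶠ g
      have hfg : (fun w => Real.log (Real.sqrt 2 / (b * Real.sin (2 * w)))) =ᶠ[nhds u]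
          (fun w => Real.log (Real.sqrt 2) - (Real.log b + Real.log (Real.sin (2 * w)))) := by
        filter_upwards [hmem] with w hw
        rw [Real.log_div (by positivity) (mul_ne_zero hb.ne' hw), Real.log_mul hb.ne' hw]
      -- derivative of g on S
      have hg' : ∀ w : ℝ, Real.sin (2 * w) ≠ 0 →
          HasDerivAt (fun w => Real.log (Real.sqrt 2) - (Real.log b + Real.log (Real.sin (2 * w))))
            (-(2 * Real.cos (2 * w) / Real.sin (2 * w))) w := by
        intro w hw
        have h1 : HasDerivAt (fun w : ℝ => Real.sin (2 * w)) (Real.cos (2 * w) * 2) w :=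
          (Real.hasDerivAt_sin (2 * w)).comp w (by simpa using (hasDerivAt_id w).const_mul (2:ℝ))
        have h2 := (Real.hasDerivAt_log hw).comp w h1
        have h3 := ((hasDerivAt_const w (Real.log b)).add h2).const_sub (Real.log (Real.sqrt 2))
        refine h3.congr_deriv ?_
        rw [div_eq_mul_inv]
        ring
      have hderiv1 : deriv (fun w => Real.log (Real.sqrt 2 / (b * Real.sin (2 * w)))) =ᶠ[nhds u]
          (fun w => -(2 * Real.cos (2 * w) / Real.sin (2 * w))) := by
        refine hfg.deriv.trans ?_
        filter_upwards [hmem] with w hw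
        exact (hg' w hw).deriv
      rw [hderiv1.deriv_eq]
      -- second derivative
      have h4 : HasDerivAt (fun w => -(2 * Real.cos (2 * w) / Real.sin (2 * w)))
          (4 / Real.sin (2 * u) ^ 2) u := by
        have hc : HasDerivAt (fun w : ℝ => 2 * Real.cos (2 * w)) (-Real.sin (2 * u) * 2 * 2) u := by
          have := ((Real.hasDerivAt_cos (2 * u)).comp u
            (by simpa using (hasDerivAt_id u).const_mul (2:ℝ))).const_mul (2:ℝ)
          refine this.congr_deriv ?_; ring
        have hs : HasDerivAt (fun w : ℝ => Real.sin (2 * w)) (Real.cos (2 * u) * 2) u :=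
          (Real.hasDerivAt_sin (2 * u)).comp u (by simpa using (hasDerivAt_id u).const_mul (2:ℝ))
        have := (hc.div hs hsinu.ne').neg
        refine this.congr_deriv ?_
        have hpy := Real.sin_sq_add_cos_sq (2 * u)
        field_simp
        nlinarith [hpy]
      rw [h4.deriv]
      have h2 : Real.sqrt 2 ^ 2 = 2 := Real.sq_sqrt (by norm_num)
      field_simp
      nlinarith [hsinu, h2, sq_nonneg (Real.sin (2*u))]
  ·   intro γ hγ hmemM hdiv hint
      set G : ℝ → ℝ := fun t => (Real.sqrt 2 / (b * Real.sin (2 * (γ t).1))) * ‖deriv γ t‖ with hG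
      have hsqrt2 : 0 < Real.sqrt 2 := by positivity
      -- positivity of sin along the curve
      have hsin : ∀ t ∈ Ico (0:ℝ) 1, 0 < Real.sin (2 * (γ t).1) := fun t ht =>
        Real.sin_pos_of_pos_of_lt_pi (by linarith [(hmemM t ht).1])
          (by linarith [(hmemM t ht).2])
      have hGnn : ∀ t ∈ Ico (0:ℝ) 1, 0 ≤ G t := fun t ht => by
        have := hsin t ht
        positivity
      -- a.e. nonneg on Ioc 0 1
      have hne1 : ∀ᵐ s : ℝ, s ≠ 1 := by
        rw [MeasureTheory.ae_iff]
        simpa using Real.volume_singleton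
      have hGae : 0 ≤ᵐ[volume.restrict (Ioc (0:ℝ) 1)] G := by
        filter_upwards [MeasureTheory.ae_restrict_mem measurableSet_Ioc,
          MeasureTheory.ae_restrict_of_ae hne1] with s hs hs1
        exact hGnn s ⟨hs.1.le, lt_of_le_of_ne hs.2 hs1⟩
      set C : ℝ := ∫ s in (0:ℝ)..1, G s with hC
      have hC0 : 0 ≤ C := by
        rw [hC, intervalIntegral.integral_of_le zero_le_one]
        exact MeasureTheory.setIntegral_nonneg_of_ae_restrict hGae
      -- HasDerivAt γ at interior points
      have hγd : ∀ x ∈ Ioo (0:ℝ) 1, HasDerivAt γ (deriv γ x) x := by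
        intro x hx
        have hn : Ico (0:ℝ) 1 ∈ nhds x := Ico_mem_nhds hx.1 hx.2
        exact ((hγ.contDiffAt hn).differentiableAt one_ne_zero).hasDerivAt
      have hufst : ∀ x ∈ Ioo (0:ℝ) 1, HasDerivAt (fun s => (γ s).1) ((deriv γ x).1) x := by
        intro x hx
        have h := ((ContinuousLinearMap.fst ℝ ℝ ℝ).hasFDerivAt.comp x (hγd x hx).hasFDerivAt)
        have h' := h.hasDerivAt
        simp at h'
        exact h'
      have hvsnd : ∀ x ∈ Ioo (0:ℝ) 1, HasDerivAt (fun s => (γ s).2) ((deriv γ x).2) x := by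
        intro x hx
        have h := ((ContinuousLinearMap.snd ℝ ℝ ℝ).hasFDerivAt.comp x (hγd x hx).hasFDerivAt)
        have h' := h.hasDerivAt
        simp at h'
        exact h'
      have hγcont : ContinuousOn γ (Ico 0 1) := hγ.continuousOn
      -- the primitive composed with u
      set c : ℝ := Real.sqrt 2 / (2 * b) with hc
      have hcpos : 0 < c := by positivity
      set g : ℝ → ℝ := fun s => c * Real.log (Real.tan ((γ s).1)) with hgdef
      -- integrability of G on subintervals
      have hφint : ∀ t ∈ Ico (0:ℝ) 1, IntegrableOn G (Icc 0 t) volume := by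
        intro t ht
        rw [integrableOn_Icc_iff_integrableOn_Ioc]
        exact hint.1.mono_set (Ioc_subset_Ioc le_rfl ht.2.le)
      have hintsub : ∀ t ∈ Ico (0:ℝ) 1, (∫ s in (0:ℝ)..t, G s) ≤ C :=
        fun t ht => intervalIntegral.integral_mono_interval le_rfl ht.1 ht.2.le hGae hint
      -- bound on |log tan u t|
      have hgcont : ∀ t ∈ Ico (0:ℝ) 1, ContinuousOn g (Icc 0 t) := by
        intro t ht
        intro s hs
        have hs' : s ∈ Ico (0:ℝ) 1 := ⟨hs.1, lt_of_le_of_lt hs.2 ht.2⟩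
        have hxm := hmemM s hs'
        have hcos : 0 < Real.cos ((γ s).1) :=
          Real.cos_pos_of_mem_Ioo ⟨by linarith [hxm.1, Real.pi_pos], hxm.2⟩
        have htan : 0 < Real.tan ((γ s).1) :=
          Real.tan_pos_of_pos_of_lt_pi_div_two hxm.1 hxm.2
        have hu : ContinuousWithinAt (fun s => (γ s).1) (Icc 0 t) s :=
          (((hγcont).mono (fun y hy => ⟨hy.1, lt_of_le_of_lt hy.2 ht.2⟩)) s hs).fst
        have houter : ContinuousAt (fun y => c * Real.log (Real.tan y)) ((γ s).1) :=
          continuousAt_const.mul ((Real.continuousAt_log htan.ne').comp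
            (Real.continuousAt_tan.2 hcos.ne'))
        show ContinuousWithinAt (fun s => c * Real.log (Real.tan ((γ s).1))) (Icc 0 t) s
        exact ContinuousAt.comp_continuousWithinAt (f := fun s => (γ s).1) houter hu
      have hkey : ∀ t ∈ Ico (0:ℝ) 1, |g t - g 0| ≤ C := by
        intro t ht
        have := abs_sub_le_int t ht.1 g (fun x => (Real.sqrt 2 / (b * Real.sin (2 * (γ x).1))) * (deriv γ x).1) G
          ((hgcont t ht))
          (fun x hx => by
            have hx1 : x ∈ Ioo (0:ℝ) 1 := ⟨hx.1, lt_trans hx.2 ht.2⟩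
            have hΦ := hasDerivAt_Phi b hb (hmemM x ⟨hx1.1.le, hx1.2⟩)
            exact ((hΦ.comp x (hufst x hx1)).hasDerivWithinAt))
          (hφint t ht)
          (fun x hx => by
            have hx1 : x ∈ Ico (0:ℝ) 1 := ⟨hx.1.le, lt_trans hx.2 ht.2⟩
            have hl : 0 ≤ Real.sqrt 2 / (b * Real.sin (2 * (γ x).1)) := by
              have := hsin x hx1; positivity
            have hfl : |(deriv γ x).1| ≤ ‖deriv γ x‖ := by
              rw [← Real.norm_eq_abs]; exact norm_fst_le _
            rw [abs_mul, abs_of_nonneg hl]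
            exact mul_le_mul_of_nonneg_left hfl hl)
        exact this.trans (hintsub t ht)
      -- bound on v
      have hvkey : ∀ t ∈ Ico (0:ℝ) 1, |(γ t).2 - (γ 0).2| ≤ (b / Real.sqrt 2) * C := by
        intro t ht
        have habs := abs_sub_le_int t ht.1 (fun s => (γ s).2) (fun x => (deriv γ x).2)
          (fun s => (b / Real.sqrt 2) * G s)
          ((hγcont.mono (fun y hy => ⟨hy.1, lt_of_le_of_lt hy.2 ht.2⟩)).snd)
          (fun x hx => (hvsnd x ⟨hx.1, lt_trans hx.2 ht.2⟩).hasDerivWithinAt)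
          ((hφint t ht).const_mul _)
          (fun x hx => by
            have hx1 : x ∈ Ico (0:ℝ) 1 := ⟨hx.1.le, lt_trans hx.2 ht.2⟩
            have hsx := hsin x hx1
            have hs1 : Real.sin (2 * (γ x).1) ≤ 1 := Real.sin_le_one _
            have h2 : |(deriv γ x).2| ≤ ‖deriv γ x‖ := by
              rw [← Real.norm_eq_abs]; exact norm_snd_le _
            have heq : (b / Real.sqrt 2) * G x = ‖deriv γ x‖ / Real.sin (2 * (γ x).1) := by
              rw [hG]
              field_simp
            rw [heq]
            refine h2.trans ?_
            rw [le_div_iff₀ hsx]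
            exact mul_le_of_le_one_right (norm_nonneg _) hs1)
        refine habs.trans ?_
        rw [intervalIntegral.integral_const_mul]
        exact mul_le_mul_of_nonneg_left (hintsub t ht) (by positivity)
      -- bound on log tan u
      set R : ℝ := |Real.log (Real.tan ((γ 0).1))| + C / c with hR
      have hLbound : ∀ t ∈ Ico (0:ℝ) 1, |Real.log (Real.tan ((γ t).1))| ≤ R := by
        intro t ht
        have h1 := hkey t ht
        rw [hgdef] at h1
        simp only at h1
        rw [← mul_sub, abs_mul, abs_of_pos hcpos] at h1
        have h2 : |Real.log (Real.tan ((γ t).1)) - Real.log (Real.tan ((γ 0).1))| ≤ C / c :=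
          (le_div_iff₀' hcpos).2 h1
        calc |Real.log (Real.tan ((γ t).1))|
            ≤ |Real.log (Real.tan ((γ t).1)) - Real.log (Real.tan ((γ 0).1))|
              + |Real.log (Real.tan ((γ 0).1))| := by
              have := abs_sub_abs_le_abs_sub (Real.log (Real.tan ((γ t).1)))
                (Real.log (Real.tan ((γ 0).1)))
              linarith [abs_nonneg (Real.log (Real.tan ((γ 0).1)))]
          _ ≤ R := by rw [hR]; linarith
      -- the compact box
      set R₂ : ℝ := |(γ 0).2| + (b / Real.sqrt 2) * C with hR₂
      set a₁ : ℝ := Real.arctan (Real.exp (-R)) with ha₁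
      set a₂ : ℝ := Real.arctan (Real.exp R) with ha₂
      have ha₁pos : 0 < a₁ := by
        have := Real.arctan_strictMono (Real.exp_pos (-R))
        rwa [Real.arctan_zero] at this
      have ha₂lt : a₂ < π / 2 := Real.arctan_lt_pi_div_two _
      set K : Set (ℝ × ℝ) := Icc a₁ a₂ ×ˢ Icc (-R₂) R₂ with hK'
      have hKsub : K ⊆ (Set.Ioo (0 : ℝ) (Real.pi / 2)) ×ˢ (Set.univ : Set ℝ) := by
        intro p hp
        exact ⟨⟨lt_of_lt_of_le ha₁pos hp.1.1, lt_of_le_of_lt hp.1.2 ha₂lt⟩, trivial⟩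
      have hKcp : IsCompact K := isCompact_Icc.prod isCompact_Icc
      -- the curve stays in K
      have hstay : ∀ t ∈ Ico (0:ℝ) 1, γ t ∈ K := by
        intro t ht
        have hxm := hmemM t ht
        have htan : 0 < Real.tan ((γ t).1) :=
          Real.tan_pos_of_pos_of_lt_pi_div_two hxm.1 hxm.2
        have hL := abs_le.1 (hLbound t ht)
        have hup : Real.tan ((γ t).1) ≤ Real.exp R := by
          rw [← Real.exp_log htan]
          exact Real.exp_le_exp.2 hL.2
        have hlo : Real.exp (-R) ≤ Real.tan ((γ t).1) := by
          rw [← Real.exp_log htan]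
          exact Real.exp_le_exp.2 hL.1
        have harc : Real.arctan (Real.tan ((γ t).1)) = (γ t).1 :=
          Real.arctan_tan (by linarith [Real.pi_pos, hxm.1]) hxm.2
        have hv := abs_le.1 ((hvkey t ht).trans (le_refl _))
        constructor
        · constructor
          · rw [ha₁, ← harc]
            exact Real.arctan_strictMono.monotone hlo
          · rw [ha₂, ← harc]
            exact Real.arctan_strictMono.monotone hup
        · have h1 : |(γ t).2| ≤ R₂ := by
            have := abs_sub_abs_le_abs_sub ((γ t).2) ((γ 0).2)
            have h2 := hvkey t ht
            rw [hR₂]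
            linarith [abs_nonneg ((γ 0).2)]
          exact abs_le.1 h1
      -- contradiction with divergence
      have hev := hdiv K hKsub hKcp
      have hev2 : ∀ᶠ t in nhdsWithin 1 (Set.Iio (1:ℝ)), t ∈ Ioo (0:ℝ) 1 :=
        Filter.eventually_of_mem (Ioo_mem_nhdsLT_of_mem ⟨zero_lt_one, le_rfl⟩) (fun x hx => hx)
      obtain ⟨t, hnK, htI⟩ := (hev.and hev2).exists
      exact hnK (hstay t ⟨htI.1.le, htI.2⟩)
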